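/- Let a and b be real numbers with a ≥ b ≥ 0 and let α be a real number with 0 < α < 1. Then a^α + b^α − (a+b)^α ≥ b^α · (2 − 2^α), and moreover b^α · (2 − 2^α) ≥ 0. -/

import Mathlib

/-- Lemma 5.1(2): for a ≥ b ≥ 0 and 0 < α < 1,
a^α + b^α − (a+b)^α ≥ b^α (2 − 2^α) ≥ 0. -/
theorem stmt_9 (a b α : ℝ) (hb : 0 ≤ b) (hba : b ≤ a)
    (hα0 : 0 < α) (hα1 : α < 1) :
    a ^ α + b ^ α - (a + b) ^ α ≥ b ^ α * (2 - 2 ^ α) ∧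
    b ^ α * (2 - 2 ^ α) ≥ 0 := by
  have h2 : (2:ℝ) ^ α ≤ 2 := by
    calc (2:ℝ) ^ α ≤ (2:ℝ) ^ (1:ℝ) :=
          Real.rpow_le_rpow_of_exponent_le one_le_two hα1.le
      _ = 2 := Real.rpow_one 2
  have hsnd : b ^ α * (2 - 2 ^ α) ≥ 0 :=
    mul_nonneg (Real.rpow_nonneg hb _) (by linarith)
  refine ⟨?_, hsnd⟩
  rcases eq_or_lt_of_le hb with hb0 | hb0
  · simp [← hb0, Real.zero_rpow hα0.ne']
  -- reduce to monotonicity of g x = (x+b)^α - x^α on [b, ∞)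
  have key : (a + b) ^ α - a ^ α ≤ (b + b) ^ α - b ^ α := by
    set g : ℝ → ℝ := fun x => (x + b) ^ α - x ^ α with hg
    have hder : ∀ x ∈ interior (Set.Ici b),
        HasDerivAt g (α * (x + b) ^ (α - 1) - α * x ^ (α - 1)) x := by
      intro x hx
      rw [interior_Ici] at hx
      have hx0 : 0 < x := lt_of_le_of_lt hb0.le hx
      have hxb : 0 < x + b := by linarith
      have hd1 : HasDerivAt (fun x : ℝ => (x + b) ^ α)
          (α * (x + b) ^ (α - 1)) x := by
        have := (Real.hasDerivAt_rpow_const (x := x + b) (p := α)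
          (Or.inl hxb.ne')).comp x ((hasDerivAt_id x).add_const b)
        simpa [mul_comm, Function.comp_def] using this
      have hd2 : HasDerivAt (fun x : ℝ => x ^ α) (α * x ^ (α - 1)) x := by
        simpa using Real.hasDerivAt_rpow_const (x := x) (p := α)
          (Or.inl hx0.ne')
      exact hd1.sub hd2
    have hanti : AntitoneOn g (Set.Ici b) := by
      apply antitoneOn_of_deriv_nonpos (convex_Ici b)
      · apply ContinuousOn.sub
        · exact ((Real.continuous_rpow_const hα0.le).comp
            (continuous_id.add continuous_const)).continuousOn
        · exact (Real.continuous_rpow_const hα0.le).continuousOn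
      · exact fun x hx => (hder x hx).differentiableAt.differentiableWithinAt
      · intro x hx
        rw [(hder x hx).deriv]
        rw [interior_Ici] at hx
        have hx0 : 0 < x := lt_of_le_of_lt hb0.le hx
        have : (x + b) ^ (α - 1) ≤ x ^ (α - 1) :=
          Real.rpow_le_rpow_of_nonpos hx0 (le_add_of_nonneg_right hb)
            (by linarith)
        nlinarith
    have := hanti (Set.self_mem_Ici) (Set.mem_Ici.mpr hba) hba
    simpa [hg, add_comm] using this
  have h2b : (b + b) ^ α = 2 ^ α * b ^ α := by
    rw [show b + b = 2 * b by ring, Real.mul_rpow (by norm_num) hb]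
  nlinarith
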